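/- For any CDF F of a probability measure on [0,1], if X has distribution F and Y has distribution the right-continuous inverse F⁻¹, then E[X²] + E[Y²] = ∫₀¹ (F(x) − x)² dx + 2/3. -/

import Mathlib

open MeasureTheory Set

-- finite measure instance for restricted volume
lemma resFin : IsFiniteMeasure (volume.restrict (Ioc (0:ℝ) 1)) :=
  ⟨by simp [Measure.restrict_apply_univ, Real.volume_Ioc]⟩

-- bounded measurable functions on Ioc 0 1 are integrable
lemma bddInt (f : ℝ → ℝ) (hf : Measurable f) (C : ℝ)
    (hC : ∀ x ∈ Ioc (0:ℝ) 1, |f x| ≤ C) : IntegrableOn f (Ioc (0:ℝ) 1) := by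
  have := resFin
  refine Integrable.mono' (integrable_const C) hf.aestronglyMeasurable ?_
  refine (ae_restrict_iff' measurableSet_Ioc).2 (ae_of_all _ ?_)
  simpa [Real.norm_eq_abs] using hC

-- ∫ over Ioc 0 1 of the indicator of Iio z of 2x equals z^2
lemma inner_int (z : ℝ) (h0 : 0 ≤ z) (h1 : z ≤ 1) :
    ∫ x in Ioc (0:ℝ) 1, (Iio z).indicator (fun x => 2*x) x = z^2 := by
  rw [MeasureTheory.integral_indicator measurableSet_Iio,
    Measure.restrict_restrict measurableSet_Iio]
  have hs : Iio z ∩ Ioc (0:ℝ) 1 = Ioo (0:ℝ) z := by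
    ext x
    constructor
    · rintro ⟨hx, hx0, hx1⟩; exact ⟨hx0, hx⟩
    · rintro ⟨hx0, hxz⟩; exact ⟨hxz, hx0, le_trans (le_of_lt hxz) h1⟩
  rw [hs, ← MeasureTheory.integral_Ioc_eq_integral_Ioo,
    ← intervalIntegral.integral_of_le h0]
  rw [intervalIntegral.integral_const_mul, integral_id]
  ring

lemma ae_snd_mem {α : Type*} [MeasurableSpace α] (μ : Measure α) [SFinite μ] :
    ∀ᵐ p ∂(μ.prod (volume.restrict (Ioc (0:ℝ) 1))), p.2 ∈ Ioc (0:ℝ) 1 := by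
  rw [MeasureTheory.ae_iff]
  have h : {p : α × ℝ | ¬ p.2 ∈ Ioc (0:ℝ) 1} = univ ×ˢ (Ioc (0:ℝ) 1)ᶜ := by
    ext p; simp
  rw [h, Measure.prod_prod, Measure.restrict_apply measurableSet_Ioc.compl]
  simp

lemma ae_fst_mem {α : Type*} [MeasurableSpace α] (μ : Measure α) [SFinite μ] :
    ∀ᵐ p ∂((volume.restrict (Ioc (0:ℝ) 1)).prod μ), p.1 ∈ Ioc (0:ℝ) 1 := by
  rw [MeasureTheory.ae_iff]
  have h : {p : ℝ × α | ¬ p.1 ∈ Ioc (0:ℝ) 1} = (Ioc (0:ℝ) 1)ᶜ ×ˢ univ := by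
    ext p; simp
  rw [h, Measure.prod_prod, Measure.restrict_apply measurableSet_Ioc.compl]
  simp

-- layer cake for square
lemma layercake {Ω : Type*} [MeasurableSpace Ω] (ℙ : Measure Ω) [IsProbabilityMeasure ℙ]
    (Z : Ω → ℝ) (hZ : Measurable Z) (hZr : ∀ᵐ ω ∂ℙ, Z ω ∈ Icc (0:ℝ) 1) :
    ∫ ω, (Z ω)^2 ∂ℙ = ∫ x in Ioc (0:ℝ) 1, (ℙ {ω | x < Z ω}).toReal * (2*x) := by
  have := resFin
  set ν := volume.restrict (Ioc (0:ℝ) 1) with hν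
  set f : Ω × ℝ → ℝ := fun p => ({q : Ω × ℝ | q.2 < Z q.1}).indicator (fun q => 2*q.2) p
    with hfdef
  have hset : MeasurableSet {q : Ω × ℝ | q.2 < Z q.1} :=
    measurableSet_lt measurable_snd (hZ.comp measurable_fst)
  have hfm : Measurable f := (measurable_snd.const_mul 2).indicator hset
  have hint : Integrable f (ℙ.prod ν) := by
    refine Integrable.mono' (integrable_const 2) hfm.aestronglyMeasurable ?_
    filter_upwards [ae_snd_mem ℙ] with p hp
    by_cases h : p ∈ {q : Ω × ℝ | q.2 < Z q.1}
    · rw [hfdef]; simp only [indicator_of_mem h]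
      rw [Real.norm_eq_abs, abs_of_nonneg (by linarith [hp.1.le] : (0:ℝ) ≤ 2 * p.2)]
      linarith [hp.2]
    · rw [hfdef]; simp [indicator_of_notMem h]
  have swap := MeasureTheory.integral_integral_swap
    (f := fun ω x => f (ω, x)) (μ := ℙ) (ν := ν) hint
  have hL : ∫ ω, ∫ x, f (ω, x) ∂ν ∂ℙ = ∫ ω, (Z ω)^2 ∂ℙ := by
    refine integral_congr_ae ?_
    filter_upwards [hZr] with ω hω
    have : (fun x => f (ω, x)) = fun x => (Iio (Z ω)).indicator (fun x => 2*x) x := by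
      funext x
      by_cases h : x < Z ω
      · simp [hfdef, indicator_of_mem, h]
      · simp [hfdef, indicator_of_notMem, h]
    rw [this]
    exact inner_int (Z ω) hω.1 hω.2
  have hR : ∫ x, ∫ ω, f (ω, x) ∂ℙ ∂ν
      = ∫ x in Ioc (0:ℝ) 1, (ℙ {ω | x < Z ω}).toReal * (2*x) := by
    refine integral_congr_ae (ae_of_all _ fun x => ?_)
    show ∫ ω, f (ω, x) ∂ℙ = (ℙ {ω | x < Z ω}).toReal * (2*x)
    have : (fun ω => f (ω, x)) = fun ω => ({ω | x < Z ω}).indicator (fun _ => 2*x) ω := by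
      funext ω
      by_cases h : x < Z ω
      · simp [hfdef, indicator_of_mem, h]
      · simp [hfdef, indicator_of_notMem, h]
    have hms : MeasurableSet {ω | x < Z ω} := hZ measurableSet_Ioi
    rw [this, MeasureTheory.integral_indicator_const _ hms]
    simp [smul_eq_mul, mul_comm, measureReal_def]
  exact (hL.symm.trans swap).trans hR

-- the key measure computation
lemma key_measure (F : ℝ → ℝ) (hFmono : MonotoneOn F (Icc 0 1)) (u c : ℝ)
    (hc : c = sSup {s | s ∈ Icc (0:ℝ) 1 ∧ F s ≤ u}) :
    0 ≤ c ∧ c ≤ 1 ∧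
      volume {s | s ∈ Ioc (0:ℝ) 1 ∧ u < F s} = ENNReal.ofReal (1 - c) := by
  set L := {s | s ∈ Icc (0:ℝ) 1 ∧ F s ≤ u} with hL
  have hbdd : BddAbove L := (bddAbove_Icc (a := (0:ℝ)) (b := 1)).mono (fun s hs => hs.1)
  have hc0 : 0 ≤ c := hc ▸ Real.sSup_nonneg (fun t ht => ht.1.1)
  have hc1 : c ≤ 1 := hc ▸ Real.sSup_le (fun t ht => ht.1.2) zero_le_one
  refine ⟨hc0, hc1, ?_⟩
  have hsub1 : Ioc c 1 ⊆ {s | s ∈ Ioc (0:ℝ) 1 ∧ u < F s} := by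
    intro s hs
    refine ⟨⟨lt_of_le_of_lt hc0 hs.1, hs.2⟩, ?_⟩
    by_contra h
    push_neg at h
    have hmem : s ∈ L := ⟨⟨le_trans hc0 hs.1.le, hs.2⟩, h⟩
    have := le_csSup hbdd hmem
    rw [← hc] at this
    exact absurd hs.1 (not_lt.2 this)
  have hsub2 : {s | s ∈ Ioc (0:ℝ) 1 ∧ u < F s} ⊆ Icc c 1 := by
    intro s hs
    refine ⟨?_, hs.1.2⟩
    rw [hc]
    refine Real.sSup_le (fun t ht => ?_) hs.1.1.le
    by_contra hts
    push_neg at hts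
    have : F s ≤ F t := hFmono ⟨hs.1.1.le, hs.1.2⟩ ht.1 hts.le
    exact absurd hs.2 (not_lt.2 (le_trans this ht.2))
  refine le_antisymm ?_ ?_
  · calc volume {s | s ∈ Ioc (0:ℝ) 1 ∧ u < F s} ≤ volume (Icc c 1) := measure_mono hsub2
      _ = ENNReal.ofReal (1 - c) := Real.volume_Icc
  · calc ENNReal.ofReal (1 - c) = volume (Ioc c 1) := Real.volume_Ioc.symm
      _ ≤ volume {s | s ∈ Ioc (0:ℝ) 1 ∧ u < F s} := measure_mono hsub1

-- Fubini for the inverse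
lemma fubini_key (G : ℝ → ℝ) (hG : Measurable G) (hGmono : MonotoneOn G (Icc 0 1))
    (hG0 : ∀ x ∈ Icc (0:ℝ) 1, 0 ≤ G x) (hG1 : G 1 = 1) (Finv : ℝ → ℝ)
    (hFinv : ∀ x ∈ Icc (0:ℝ) 1, Finv x = sSup {s | s ∈ Icc (0:ℝ) 1 ∧ G s ≤ x}) :
    ∫ u in Ioc (0:ℝ) 1, (1 - Finv u) * (2*u) = ∫ s in Ioc (0:ℝ) 1, (G s)^2 := by
  have := resFin
  set ν := volume.restrict (Ioc (0:ℝ) 1) with hν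
  set g : ℝ × ℝ → ℝ := fun p => ({q : ℝ × ℝ | q.1 < G q.2}).indicator (fun q => 2*q.1) p
    with hgdef
  have hset : MeasurableSet {q : ℝ × ℝ | q.1 < G q.2} :=
    measurableSet_lt measurable_fst (hG.comp measurable_snd)
  have hgm : Measurable g := (measurable_fst.const_mul 2).indicator hset
  have hint : Integrable g (ν.prod ν) := by
    refine Integrable.mono' (integrable_const 2) hgm.aestronglyMeasurable ?_
    filter_upwards [ae_fst_mem ν] with p hp
    by_cases h : p ∈ {q : ℝ × ℝ | q.1 < G q.2}
    · rw [hgdef]; simp only [indicator_of_mem h]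
      rw [Real.norm_eq_abs, abs_of_nonneg (by linarith [hp.1.le] : (0:ℝ) ≤ 2 * p.1)]
      linarith [hp.2]
    · rw [hgdef]; simp [indicator_of_notMem h]
  have swap := MeasureTheory.integral_integral_swap
    (f := fun u s => g (u, s)) (μ := ν) (ν := ν) hint
  have hL : ∫ u, ∫ s, g (u, s) ∂ν ∂ν = ∫ u in Ioc (0:ℝ) 1, (1 - Finv u) * (2*u) := by
    refine setIntegral_congr_fun measurableSet_Ioc (fun u hu => ?_)
    show ∫ s, g (u, s) ∂ν = (1 - Finv u) * (2*u)
    have h1 : (fun s => g (u, s)) = fun s => ({s | u < G s}).indicator (fun _ => 2*u) s := by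
      funext s
      by_cases h : u < G s
      · simp [hgdef, indicator_of_mem, h]
      · simp [hgdef, indicator_of_notMem, h]
    have hms : MeasurableSet {s | u < G s} := measurableSet_lt measurable_const hG
    rw [h1, MeasureTheory.integral_indicator_const _ hms]
    have hmeas : ν {s | u < G s} = ENNReal.ofReal (1 - Finv u) := by
      rw [hν, Measure.restrict_apply (measurableSet_lt measurable_const hG)]
      have hsets : {s | u < G s} ∩ Ioc (0:ℝ) 1 = {s | s ∈ Ioc (0:ℝ) 1 ∧ u < G s} := by
        ext s; exact ⟨fun ⟨a, b⟩ => ⟨b, a⟩, fun ⟨a, b⟩ => ⟨b, a⟩⟩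
      rw [hsets]
      exact (key_measure G hGmono u (Finv u) (hFinv u ⟨hu.1.le, hu.2⟩)).2.2
    have hkey := key_measure G hGmono u (Finv u) (hFinv u ⟨hu.1.le, hu.2⟩)
    rw [measureReal_def, hmeas, ENNReal.toReal_ofReal (by linarith [hkey.2.1])]
    simp [smul_eq_mul]
  have hR : ∫ s, ∫ u, g (u, s) ∂ν ∂ν = ∫ s in Ioc (0:ℝ) 1, (G s)^2 := by
    refine setIntegral_congr_fun measurableSet_Ioc (fun s hs => ?_)
    show ∫ u, g (u, s) ∂ν = (G s)^2
    have h1 : (fun u => g (u, s)) = fun u => (Iio (G s)).indicator (fun u => 2*u) u := by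
      funext u
      by_cases h : u < G s
      · simp [hgdef, indicator_of_mem, h]
      · simp [hgdef, indicator_of_notMem, h]
    rw [h1]
    exact inner_int (G s) (hG0 s ⟨hs.1.le, hs.2⟩)
      (hG1 ▸ hGmono ⟨hs.1.le, hs.2⟩ ⟨zero_le_one, le_refl 1⟩ hs.2)
  exact (hL.symm.trans swap).trans hR

theorem stmt_3
    {Ω : Type*} [MeasurableSpace Ω] (ℙ : Measure Ω) [IsProbabilityMeasure ℙ]
    (F : ℝ → ℝ) (hFmono : MonotoneOn F (Icc 0 1))
    (hFrc : ∀ x ∈ Ico (0:ℝ) 1, ContinuousWithinAt F (Ici x) x)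
    (hF0 : ∀ x ∈ Icc (0:ℝ) 1, 0 ≤ F x) (hF1 : F 1 = 1)
    (Finv : ℝ → ℝ)
    (hFinv : ∀ x ∈ Icc (0:ℝ) 1, Finv x = sSup {s | s ∈ Icc (0:ℝ) 1 ∧ F s ≤ x})
    (X Y : Ω → ℝ) (hX : Measurable X) (hY : Measurable Y)
    (hXr : ∀ᵐ ω ∂ℙ, X ω ∈ Icc (0:ℝ) 1) (hYr : ∀ᵐ ω ∂ℙ, Y ω ∈ Icc (0:ℝ) 1)
    (hXd : ∀ x ∈ Icc (0:ℝ) 1, (ℙ {ω | X ω ≤ x}).toReal = F x)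
    (hYd : ∀ x ∈ Icc (0:ℝ) 1, (ℙ {ω | Y ω ≤ x}).toReal = Finv x) :
    (∫ ω, (X ω)^2 ∂ℙ) + (∫ ω, (Y ω)^2 ∂ℙ)
      = (∫ x in (0:ℝ)..1, (F x - x)^2) + 2/3 := by
  -- monotone clamp extension of F
  set G : ℝ → ℝ := fun x => F (max 0 (min 1 x)) with hGdef
  have hclamp_mem : ∀ x : ℝ, max 0 (min 1 x) ∈ Icc (0:ℝ) 1 := fun x =>
    ⟨le_max_left _ _, max_le zero_le_one (min_le_left _ _)⟩
  have hGeq : ∀ x ∈ Icc (0:ℝ) 1, G x = F x := by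
    intro x hx
    rw [hGdef]
    simp only
    rw [min_eq_right hx.2, max_eq_right hx.1]
  have hGmono : Monotone G := by
    intro a b hab
    exact hFmono (hclamp_mem a) (hclamp_mem b)
      (max_le_max le_rfl (min_le_min le_rfl hab))
  have hG : Measurable G := hGmono.measurable
  have hGmonoOn : MonotoneOn G (Icc 0 1) := hGmono.monotoneOn _
  have hG0 : ∀ x ∈ Icc (0:ℝ) 1, 0 ≤ G x := fun x hx => (hGeq x hx) ▸ hF0 x hx
  have hG1 : G 1 = 1 := by rw [hGeq 1 ⟨zero_le_one, le_refl 1⟩]; exact hF1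
  have hGicc : ∀ x ∈ Icc (0:ℝ) 1, G x ∈ Icc (0:ℝ) 1 := fun x hx =>
    ⟨hG0 x hx, hG1 ▸ hGmonoOn hx ⟨zero_le_one, le_refl 1⟩ hx.2⟩
  have hGinv : ∀ x ∈ Icc (0:ℝ) 1, Finv x = sSup {s | s ∈ Icc (0:ℝ) 1 ∧ G s ≤ x} := by
    intro x hx
    rw [hFinv x hx]
    congr 1
    ext s
    simp only [mem_setOf_eq, and_congr_right_iff]
    intro hs
    rw [hGeq s hs]
  -- complement probabilities
  have hcompl : ∀ (Z : Ω → ℝ), Measurable Z → ∀ x, (ℙ {ω | x < Z ω}).toReal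
      = 1 - (ℙ {ω | Z ω ≤ x}).toReal := by
    intro Z hZ x
    have hms : MeasurableSet {ω | Z ω ≤ x} := hZ measurableSet_Iic
    have h1 : {ω | x < Z ω} = {ω | Z ω ≤ x}ᶜ := by ext ω; simp
    rw [h1, measure_compl hms (measure_ne_top _ _), measure_univ,
      ENNReal.toReal_sub_of_le prob_le_one ENNReal.one_ne_top, ENNReal.toReal_one]
  -- E[X^2]
  have hEX : ∫ ω, (X ω)^2 ∂ℙ = ∫ x in Ioc (0:ℝ) 1, (1 - G x) * (2*x) := by
    rw [layercake ℙ X hX hXr]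
    refine setIntegral_congr_fun measurableSet_Ioc (fun x hx => ?_)
    rw [hcompl X hX x, hXd x ⟨hx.1.le, hx.2⟩, hGeq x ⟨hx.1.le, hx.2⟩]
  -- E[Y^2]
  have hEY : ∫ ω, (Y ω)^2 ∂ℙ = ∫ s in Ioc (0:ℝ) 1, (G s)^2 := by
    rw [layercake ℙ Y hY hYr, ← fubini_key G hG hGmonoOn hG0 hG1 Finv hGinv]
    refine setIntegral_congr_fun measurableSet_Ioc (fun u hu => ?_)
    rw [hcompl Y hY u, hYd u ⟨hu.1.le, hu.2⟩]
  -- integrabilities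
  have hint1 : IntegrableOn (fun x => (1 - G x) * (2*x)) (Ioc (0:ℝ) 1) := by
    refine bddInt _ (((measurable_const.sub hG)).mul (measurable_id.const_mul 2)) 2
      (fun x hx => ?_)
    have h := hGicc x ⟨hx.1.le, hx.2⟩
    rw [abs_of_nonneg (mul_nonneg (by linarith [h.2]) (by linarith [hx.1]))]
    nlinarith [h.1, h.2, hx.1, hx.2]
  have hint2 : IntegrableOn (fun x => (G x)^2) (Ioc (0:ℝ) 1) := by
    refine bddInt _ (hG.pow_const 2) 1 (fun x hx => ?_)
    have h := hGicc x ⟨hx.1.le, hx.2⟩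
    rw [abs_of_nonneg (sq_nonneg _)]
    nlinarith [h.1, h.2]
  have hint3 : IntegrableOn (fun x => (G x - x)^2) (Ioc (0:ℝ) 1) := by
    refine bddInt _ ((hG.sub measurable_id).pow_const 2) 1 (fun x hx => ?_)
    have h := hGicc x ⟨hx.1.le, hx.2⟩
    rw [abs_of_nonneg (sq_nonneg _)]
    nlinarith [h.1, h.2, hx.1, hx.2]
  have hint4 : IntegrableOn (fun x : ℝ => 2*x - x^2) (Ioc (0:ℝ) 1) := by
    refine bddInt _ ((measurable_id.const_mul 2).sub (measurable_id.pow_const 2)) 3 (fun x hx => ?_)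
    rw [abs_of_nonneg (by nlinarith [hx.1, hx.2])]
    nlinarith [hx.1, hx.2]
  rw [hEX, hEY, ← MeasureTheory.integral_add hint1 hint2]
  have hring : ∫ x in Ioc (0:ℝ) 1, ((1 - G x) * (2*x) + (G x)^2)
      = ∫ x in Ioc (0:ℝ) 1, ((G x - x)^2 + (2*x - x^2)) := by
    refine integral_congr_ae (ae_of_all _ fun x => ?_)
    ring
  rw [hring, MeasureTheory.integral_add hint3 hint4]
  have hfin1 : ∫ x in Ioc (0:ℝ) 1, (G x - x)^2 = ∫ x in (0:ℝ)..1, (F x - x)^2 := by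
    rw [intervalIntegral.integral_of_le zero_le_one]
    refine setIntegral_congr_fun measurableSet_Ioc (fun x hx => ?_)
    rw [hGeq x ⟨hx.1.le, hx.2⟩]
  have hfin2 : ∫ x in Ioc (0:ℝ) 1, (2*x - x^2) = 2/3 := by
    rw [← intervalIntegral.integral_of_le zero_le_one,
      intervalIntegral.integral_sub ((intervalIntegral.intervalIntegrable_id).const_mul 2)
        (intervalIntegral.intervalIntegrable_pow 2),
      intervalIntegral.integral_const_mul, integral_id,
      integral_pow]
    norm_num
  rw [hfin1, hfin2]
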